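/- arXiv:2102.11555 — 3 statements merged into one kernel-verified Lean document; each statement's English description precedes it below -/
import Mathlib

section
/- Let p ≥ 2 and α₂ > 0, and let C : ℝ → ℝ be a nonnegative function satisfying, for all x, x' ∈ ℝ and all λ ∈ (0,1), 0 ≤ λ·C(x) + (1−λ)·C(x') − C(λx + (1−λ)x') ≤ α₂·λ(1−λ)·(1 + C(x) + C(x'))^{1−2/p}·|x−x'|². Then C is convex on ℝ, continuously differentiable on ℝ, and its derivative C' is locally Lipschitz continuous. -/
open Set Filter Topology

/-- Infimum of right slopes of `f` at `x`, over `Ioc x b`. -/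
noncomputable def rdAux (f : ℝ → ℝ) (b x : ℝ) : ℝ :=
  sInf ((fun y => (f y - f x) / (y - x)) '' Set.Ioc x b)

lemma rdAux_le {a b : ℝ} {f : ℝ → ℝ} (hf : ConvexOn ℝ (Set.Icc a b) f)
    {x : ℝ} (hx : x ∈ Set.Ioo a b) {y : ℝ} (hy : y ∈ Set.Ioc x b) :
    rdAux f b x ≤ (f y - f x) / (y - x) := by
  apply csInf_le
  · refine ⟨(f x - f a) / (x - a), ?_⟩
    rintro _ ⟨z, hz, rfl⟩
    exact hf.slope_mono_adjacent ⟨le_refl a, (hx.1.trans hx.2).le⟩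
      ⟨(hx.1.trans hz.1).le, hz.2⟩ hx.1 hz.1
  · exact ⟨y, hy, rfl⟩

lemma le_rdAux {a b : ℝ} {f : ℝ → ℝ} (hf : ConvexOn ℝ (Set.Icc a b) f)
    {x : ℝ} (hx : x ∈ Set.Ioo a b) {y : ℝ} (hy : y ∈ Set.Ico a x) :
    (f x - f y) / (x - y) ≤ rdAux f b x := by
  refine le_csInf ⟨(f b - f x) / (b - x), ⟨b, ⟨hx.2, le_rfl⟩, rfl⟩⟩ ?_
  rintro _ ⟨z, hz, rfl⟩
  exact hf.slope_mono_adjacent ⟨hy.1, (hy.2.trans hx.2).le⟩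
    ⟨(hx.1.trans hz.1).le, hz.2⟩ hy.2 hz.1

/-- Core lemma: if `f` is convex on `[a,b]` and `K y² - f y` is convex on `[a,b]`,
then `f` is differentiable at interior points, with derivative `rdAux f b x`. -/
lemma key_hasDerivAt {a b K : ℝ} (hK : 0 ≤ K) {f : ℝ → ℝ}
    (hf : ConvexOn ℝ (Set.Icc a b) f)
    (hg : ConvexOn ℝ (Set.Icc a b) (fun y => K * y ^ 2 - f y))
    {x : ℝ} (hx : x ∈ Set.Ioo a b) :
    HasDerivAt f (rdAux f b x) x := by
  set L := rdAux f b x with hL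
  rw [hasDerivAt_iff_tendsto_slope]
  set δ := min (x - a) (b - x) with hδdef
  have hδa : δ ≤ x - a := min_le_left _ _
  have hδb : δ ≤ b - x := min_le_right _ _
  have hδ : 0 < δ := lt_min (by linarith [hx.1]) (by linarith [hx.2])
  -- second difference bound
  have hsecond : ∀ h : ℝ, 0 < h → h ≤ δ →
      f (x + h) + f (x - h) - 2 * f x ≤ 2 * K * h ^ 2 := by
    intro h h0 hδh
    have hm : x - h ∈ Set.Icc a b := ⟨by linarith, by linarith [hx.2]⟩
    have hp : x + h ∈ Set.Icc a b := ⟨by linarith [hx.1], by linarith⟩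
    have h2 := hg.2 hm hp (by norm_num : (0:ℝ) ≤ 1/2) (by norm_num : (0:ℝ) ≤ 1/2)
      (by norm_num : (1:ℝ)/2 + 1/2 = 1)
    simp only [smul_eq_mul] at h2
    have hmid : (1/2 : ℝ) * (x - h) + (1/2 : ℝ) * (x + h) = x := by ring
    rw [hmid] at h2
    nlinarith [h2]
  -- bound on slopes near x
  have hbound : ∀ y ∈ Set.Ioo (x - δ) (x + δ), y ≠ x →
      |(f y - f x) / (y - x) - L| ≤ 2 * K * |y - x| := by
    intro y hy hyx
    rcases lt_or_gt_of_ne hyx with hlt | hgt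
    · -- y < x
      have h0 : 0 < x - y := by linarith
      have hhδ : x - y ≤ δ := by linarith [hy.1]
      have hs1 : (f x - f y) / (x - y) ≤ L :=
        le_rdAux hf hx ⟨by linarith [hy.1], hlt⟩
      have hs2 : L ≤ (f (x + (x - y)) - f x) / (x + (x - y) - x) :=
        rdAux_le hf hx ⟨by linarith, by linarith [hx.2]⟩
      have hsum := hsecond (x - y) h0 hhδ
      rw [show x - (x - y) = y from by ring] at hsum
      rw [show x + (x - y) - x = x - y from by ring] at hs2
      have hslope_eq : (f y - f x) / (y - x) = (f x - f y) / (x - y) := by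
        rw [div_eq_div_iff (sub_ne_zero.2 hyx) (ne_of_gt h0)]; ring
      have habs : |y - x| = x - y := by rw [abs_sub_comm, abs_of_pos h0]
      rw [hslope_eq, habs, abs_le]
      have hdiff : (f (x + (x - y)) - f x) / (x - y) - (f x - f y) / (x - y)
          ≤ 2 * K * (x - y) := by
        rw [div_sub_div_same, div_le_iff₀ h0]
        nlinarith [hsum]
      constructor
      · linarith [hs2, hdiff]
      · linarith [hs1, mul_nonneg (mul_nonneg (by norm_num : (0:ℝ) ≤ 2) hK) h0.le]
    · -- x < y
      have h0 : 0 < y - x := by linarith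
      have hhδ : y - x ≤ δ := by linarith [hy.2]
      have hs1 : L ≤ (f y - f x) / (y - x) :=
        rdAux_le hf hx ⟨hgt, by linarith [hy.2]⟩
      have hs2 : (f x - f (x - (y - x))) / (x - (x - (y - x))) ≤ L :=
        le_rdAux hf hx ⟨by linarith, by linarith⟩
      have hsum := hsecond (y - x) h0 hhδ
      rw [show x + (y - x) = y from by ring] at hsum
      rw [show x - (x - (y - x)) = y - x from by ring] at hs2
      have habs : |y - x| = y - x := abs_of_pos h0
      rw [habs, abs_le]
      have hdiff : (f y - f x) / (y - x) - (f x - f (x - (y - x))) / (y - x)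
          ≤ 2 * K * (y - x) := by
        rw [div_sub_div_same, div_le_iff₀ h0]
        nlinarith [hsum]
      constructor
      · linarith [hs1, mul_nonneg (mul_nonneg (by norm_num : (0:ℝ) ≤ 2) hK) h0.le]
      · linarith [hs2, hdiff]
  -- squeeze
  have hlo : Tendsto (fun y : ℝ => L - 2 * K * |y - x|) (𝓝[≠] x) (𝓝 L) := by
    have hc : Continuous fun y : ℝ => L - 2 * K * |y - x| := by fun_prop
    have := hc.tendsto x
    simp only [sub_self, abs_zero, mul_zero, sub_zero] at this
    exact this.mono_left nhdsWithin_le_nhds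
  have hhi : Tendsto (fun y : ℝ => L + 2 * K * |y - x|) (𝓝[≠] x) (𝓝 L) := by
    have hc : Continuous fun y : ℝ => L + 2 * K * |y - x| := by fun_prop
    have := hc.tendsto x
    simp only [sub_self, abs_zero, mul_zero, add_zero] at this
    exact this.mono_left nhdsWithin_le_nhds
  have hmem : Set.Ioo (x - δ) (x + δ) ∈ 𝓝[≠] x :=
    nhdsWithin_le_nhds (Ioo_mem_nhds (by linarith) (by linarith))
  refine tendsto_of_tendsto_of_tendsto_of_le_of_le' hlo hhi ?_ ?_
  · filter_upwards [hmem, self_mem_nhdsWithin] with y hy hy'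
    have hyx : y ≠ x := hy'
    have := abs_le.1 (hbound y hy hyx)
    have hsl : slope f x y = (f y - f x) / (y - x) := slope_def_field f x y
    rw [hsl]; linarith [this.1]
  · filter_upwards [hmem, self_mem_nhdsWithin] with y hy hy'
    have hyx : y ≠ x := hy'
    have := abs_le.1 (hbound y hy hyx)
    have hsl : slope f x y = (f y - f x) / (y - x) := slope_def_field f x y
    rw [hsl]; linarith [this.2]

lemma key_mono {a b : ℝ} {f : ℝ → ℝ} (hf : ConvexOn ℝ (Set.Icc a b) f)
    {x y : ℝ} (hx : x ∈ Set.Ioo a b) (hy : y ∈ Set.Ioo a b) (hxy : x < y) :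
    rdAux f b x ≤ rdAux f b y := by
  have h1 : rdAux f b x ≤ (f y - f x) / (y - x) := rdAux_le hf hx ⟨hxy, hy.2.le⟩
  have h2 : (f y - f x) / (y - x) ≤ rdAux f b y := le_rdAux hf hy ⟨hx.1.le, hxy⟩
  linarith

lemma key_lipschitz {a b K : ℝ} (hK : 0 ≤ K) {f : ℝ → ℝ}
    (hf : ConvexOn ℝ (Set.Icc a b) f)
    (hg : ConvexOn ℝ (Set.Icc a b) (fun y => K * y ^ 2 - f y))
    {x y : ℝ} (hx : x ∈ Set.Ioo a b) (hy : y ∈ Set.Ioo a b) (hxy : x < y) :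
    rdAux f b y - rdAux f b x ≤ 2 * K * (y - x) := by
  set g : ℝ → ℝ := fun y => K * y ^ 2 - f y with hgdef
  have hg' : ConvexOn ℝ (Set.Icc a b) (fun z => K * z ^ 2 - g z) := by
    have : (fun z => K * z ^ 2 - g z) = f := by
      funext z; simp [hgdef]
    rw [this]; exact hf
  have hmono := key_mono hg hx hy hxy
  have heq : ∀ z ∈ Set.Ioo a b, rdAux g b z = 2 * K * z - rdAux f b z := by
    intro z hz
    have h1 : HasDerivAt g (rdAux g b z) z := key_hasDerivAt hK hg hg' hz
    have h2 : HasDerivAt f (rdAux f b z) z := key_hasDerivAt hK hf hg hz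
    have h3 : HasDerivAt (fun w : ℝ => K * w ^ 2) (K * (2 * z ^ 1)) z :=
      (hasDerivAt_pow 2 z).const_mul K
    have h4 : HasDerivAt g (K * (2 * z ^ 1) - rdAux f b z) z := h3.sub h2
    have := h1.unique h4
    rw [this]; ring
  rw [heq x hx, heq y hy] at hmono
  linarith

/-- Assumption 2.1(iii) of the paper implies that the cost function `C` is convex,
continuously differentiable, and has a locally Lipschitz derivative. -/
theorem stmt_0 (p α₂ : ℝ) (hp : 2 ≤ p) (hα₂ : 0 < α₂) (C : ℝ → ℝ)
    (hC_nonneg : ∀ x : ℝ, 0 ≤ C x)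
    (hC : ∀ x x' lam : ℝ, lam ∈ Set.Ioo (0:ℝ) 1 →
      0 ≤ lam * C x + (1 - lam) * C x' - C (lam * x + (1 - lam) * x') ∧
      lam * C x + (1 - lam) * C x' - C (lam * x + (1 - lam) * x') ≤
        α₂ * lam * (1 - lam) * (1 + C x + C x') ^ (1 - 2 / p) * |x - x'| ^ 2) :
    ConvexOn ℝ Set.univ C ∧ ContDiff ℝ 1 C ∧ LocallyLipschitz (deriv C) := by
  have hp0 : 0 < p := by linarith
  have hexp : 0 ≤ 1 - 2 / p := by
    have : 2 / p ≤ 1 := (div_le_one hp0).2 hp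
    linarith
  -- convexity
  have hconv : ConvexOn ℝ Set.univ C := by
    rw [convexOn_iff_forall_pos]
    refine ⟨convex_univ, fun x _ y _ a b ha hb hab => ?_⟩
    have hb1 : b = 1 - a := by linarith
    subst hb1
    have h := (hC x y a ⟨ha, by linarith⟩).1
    simp only [smul_eq_mul]
    linarith
  have hcont : Continuous C := by
    rw [← continuousOn_univ]
    exact hconv.continuousOn isOpen_univ
  -- for each R, a quadratic companion
  have hquad : ∀ R : ℝ, 0 < R → ∃ K : ℝ, 0 ≤ K ∧
      ConvexOn ℝ (Set.Icc (-R) R) (fun y => K * y ^ 2 - C y) := by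
    intro R hR
    obtain ⟨M, hM⟩ := (isCompact_Icc (a := -R) (b := R)).exists_bound_of_continuousOn
      hcont.continuousOn
    have hM0 : 0 ≤ M := le_trans (norm_nonneg _) (hM 0 ⟨by linarith, by linarith⟩)
    set M' : ℝ := 1 + 2 * M with hM'def
    have hM'1 : (1:ℝ) ≤ M' := by simp only [hM'def]; linarith
    refine ⟨α₂ * M' ^ (1 - 2 / p), mul_nonneg hα₂.le (Real.rpow_nonneg (by linarith) _), ?_⟩
    rw [convexOn_iff_forall_pos]
    refine ⟨convex_Icc _ _, fun u hu v hv a b ha hb hab => ?_⟩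
    have hb1 : b = 1 - a := by linarith
    subst hb1
    have ha1 : a < 1 := by linarith
    have hCu : C u ≤ M := by
      have := hM u hu; rw [Real.norm_eq_abs, abs_of_nonneg (hC_nonneg u)] at this
      exact this
    have hCv : C v ≤ M := by
      have := hM v hv; rw [Real.norm_eq_abs, abs_of_nonneg (hC_nonneg v)] at this
      exact this
    have hbase : 1 + C u + C v ≤ M' := by simp only [hM'def]; linarith
    have hXle : (1 + C u + C v) ^ (1 - 2 / p) ≤ M' ^ (1 - 2 / p) :=
      Real.rpow_le_rpow (by linarith [hC_nonneg u, hC_nonneg v]) hbase hexp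
    have hD := (hC u v a ⟨ha, ha1⟩).2
    have hchain : α₂ * a * (1 - a) * ((1 + C u + C v) ^ (1 - 2 / p)) * |u - v| ^ 2 ≤
        α₂ * a * (1 - a) * (M' ^ (1 - 2 / p)) * |u - v| ^ 2 := by
      apply mul_le_mul_of_nonneg_right _ (by positivity)
      apply mul_le_mul_of_nonneg_left hXle
      positivity
    have heq2 : α₂ * a * (1 - a) * (M' ^ (1 - 2 / p)) * |u - v| ^ 2 =
        α₂ * M' ^ (1 - 2 / p) * (a * (1 - a) * (u - v) ^ 2) := by
      rw [sq_abs]; ring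
    have hquadid : a * (α₂ * M' ^ (1 - 2 / p) * u ^ 2) +
        (1 - a) * (α₂ * M' ^ (1 - 2 / p) * v ^ 2) -
        α₂ * M' ^ (1 - 2 / p) * (a * u + (1 - a) * v) ^ 2 =
        α₂ * M' ^ (1 - 2 / p) * (a * (1 - a) * (u - v) ^ 2) := by ring
    simp only [smul_eq_mul]
    linarith [hD, hchain, heq2 ▸ hchain, hquadid]
  -- pointwise derivative facts, packaged per radius
  have hmain : ∀ R : ℝ, 0 < R → ∃ K : ℝ, 0 ≤ K ∧
      (∀ x ∈ Set.Ioo (-R) R, HasDerivAt C (rdAux C R x) x) ∧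
      (∀ x ∈ Set.Ioo (-R) R, ∀ y ∈ Set.Ioo (-R) R, x < y →
        rdAux C R x ≤ rdAux C R y ∧ rdAux C R y - rdAux C R x ≤ 2 * K * (y - x)) := by
    intro R hR
    obtain ⟨K, hK, hgconv⟩ := hquad R hR
    have hfI : ConvexOn ℝ (Set.Icc (-R) R) C :=
      hconv.subset (Set.subset_univ _) (convex_Icc _ _)
    exact ⟨K, hK, fun x hx => key_hasDerivAt hK hfI hgconv hx,
      fun x hx y hy hxy => ⟨key_mono hfI hx hy hxy, key_lipschitz hK hfI hgconv hx hy hxy⟩⟩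
  have hmemIoo : ∀ x : ℝ, x ∈ Set.Ioo (-(|x| + 1)) (|x| + 1) := by
    intro x
    constructor
    · have := neg_abs_le x; linarith
    · have := le_abs_self x; linarith
  have hdiff : Differentiable ℝ C := by
    intro x
    obtain ⟨K, hK, hd, _⟩ := hmain (|x| + 1) (by positivity)
    exact (hd x (hmemIoo x)).differentiableAt
  have hlip : LocallyLipschitz (deriv C) := by
    intro x
    set R : ℝ := |x| + 1 with hRdef
    obtain ⟨K, hK, hd, hmono⟩ := hmain R (by positivity)
    refine ⟨(2 * K).toNNReal, Set.Ioo (-R) R,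
      Ioo_mem_nhds (hmemIoo x).1 (hmemIoo x).2, ?_⟩
    apply LipschitzOnWith.of_dist_le_mul
    intro u hu v hv
    rw [Real.dist_eq, Real.dist_eq]
    have hcoe : ((2 * K).toNNReal : ℝ) = 2 * K :=
      Real.coe_toNNReal _ (by linarith)
    rw [hcoe]
    have hdu : deriv C u = rdAux C R u := (hd u hu).deriv
    have hdv : deriv C v = rdAux C R v := (hd v hv).deriv
    rcases lt_trichotomy u v with h | h | h
    · obtain ⟨h1, h2⟩ := hmono u hu v hv h
      rw [hdu, hdv, abs_sub_comm, abs_of_nonneg (by linarith :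
        (0:ℝ) ≤ rdAux C R v - rdAux C R u), abs_sub_comm u v,
        abs_of_pos (by linarith : (0:ℝ) < v - u)]
      linarith
    · subst h; simp
    · obtain ⟨h1, h2⟩ := hmono v hv u hu h
      rw [hdu, hdv, abs_of_nonneg (by linarith :
        (0:ℝ) ≤ rdAux C R u - rdAux C R v),
        abs_of_pos (by linarith : (0:ℝ) < u - v)]
      linarith
  exact ⟨hconv, contDiff_one_iff_deriv.2 ⟨hdiff, hlip.continuous⟩, hlip⟩
end

section
/- Let K⁺, K⁻ > 0 and let v : ℝ × (0,1) → ℝ be continuous, nondecreasing in its first variable, and nondecreasing in its second variable. Assume there exist x₊*, x₋* ∈ ℝ such that v(x,π) ≤ −K⁺ whenever x ≤ x₊* and v(x,π) ≥ K⁻ whenever x ≥ x₋*, for every π ∈ (0,1). Define v̄(x,φ) := (1+φ)·v(x, φ/(1+φ)), b₊(φ) := sup{x ∈ ℝ : v̄(x,φ) ≤ −K⁺(1+φ)} and b₋(φ) := inf{x ∈ ℝ : v̄(x,φ) ≥ K⁻(1+φ)} for φ ∈ (0,∞). Then: (i) b₊ and b₋ are real-valued and nonincreasing on (0,∞); (ii)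 b₊ is left-continuous and b₋ is right-continuous on (0,∞); (iii) x₊* ≤ b₊(φ) < b₋(φ) ≤ x₋* for all φ ∈ (0,∞). -/
open Set Filter Topology

/-- Proposition 4.5 of the paper: properties of the free boundaries `b₊, b₋` of the Dynkin
game in likelihood-ratio coordinates. -/
theorem stmt_4 (Kp Km : ℝ) (hKp : 0 < Kp) (hKm : 0 < Km)
    (v : ℝ → ℝ → ℝ)
    (hv_cont : ContinuousOn (fun q : ℝ × ℝ => v q.1 q.2) (Set.univ ×ˢ Set.Ioo 0 1))
    (hv_x : ∀ π ∈ Set.Ioo (0:ℝ) 1, Monotone fun x => v x π)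
    (hv_pi : ∀ x : ℝ, MonotoneOn (fun π => v x π) (Set.Ioo 0 1))
    (xps xms : ℝ)
    (hbd_p : ∀ π ∈ Set.Ioo (0:ℝ) 1, ∀ x : ℝ, x ≤ xps → v x π ≤ -Kp)
    (hbd_m : ∀ π ∈ Set.Ioo (0:ℝ) 1, ∀ x : ℝ, xms ≤ x → Km ≤ v x π)
    (vbar : ℝ → ℝ → ℝ)
    (hvbar : ∀ x φ : ℝ, vbar x φ = (1 + φ) * v x (φ / (1 + φ)))
    (bp bm : ℝ → ℝ)
    (hbp : ∀ φ : ℝ, bp φ = sSup {x : ℝ | vbar x φ ≤ -Kp * (1 + φ)})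
    (hbm : ∀ φ : ℝ, bm φ = sInf {x : ℝ | Km * (1 + φ) ≤ vbar x φ}) :
    (∀ φ ∈ Set.Ioi (0:ℝ),
        IsLUB {x : ℝ | vbar x φ ≤ -Kp * (1 + φ)} (bp φ) ∧
        IsGLB {x : ℝ | Km * (1 + φ) ≤ vbar x φ} (bm φ)) ∧
    AntitoneOn bp (Set.Ioi 0) ∧ AntitoneOn bm (Set.Ioi 0) ∧
    (∀ φ ∈ Set.Ioi (0:ℝ), ContinuousWithinAt bp (Set.Iio φ) φ) ∧
    (∀ φ ∈ Set.Ioi (0:ℝ), ContinuousWithinAt bm (Set.Ioi φ) φ) ∧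
    (∀ φ ∈ Set.Ioi (0:ℝ), xps ≤ bp φ ∧ bp φ < bm φ ∧ bm φ ≤ xms) := by
  have hKpm : -Kp < Km := by linarith
  set p : ℝ → ℝ := fun φ => φ / (1 + φ) with hpdef
  have h1φ : ∀ φ : ℝ, 0 < φ → (0:ℝ) < 1 + φ := fun φ hφ => by linarith
  have hpmem : ∀ φ : ℝ, 0 < φ → p φ ∈ Set.Ioo (0:ℝ) 1 := by
    intro φ hφ
    have h1 := h1φ φ hφ
    exact ⟨div_pos hφ h1, by rw [hpdef]; simp only; rw [div_lt_one h1]; linarith⟩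
  have hpmono : ∀ φ₁ φ₂ : ℝ, 0 < φ₁ → φ₁ ≤ φ₂ → p φ₁ ≤ p φ₂ := by
    intro φ₁ φ₂ h1 h2
    have ha := h1φ φ₁ h1
    have hb : (0:ℝ) < 1 + φ₂ := by linarith
    rw [hpdef]; simp only
    rw [div_le_div_iff₀ ha hb]
    nlinarith
  have hvbar' : ∀ x φ : ℝ, vbar x φ = (1 + φ) * v x (p φ) := hvbar
  -- characterization of the sets
  have hA : ∀ φ x : ℝ, 0 < φ → (vbar x φ ≤ -Kp * (1 + φ) ↔ v x (p φ) ≤ -Kp) := by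
    intro φ x hφ
    have h1 := h1φ φ hφ
    rw [hvbar' x φ, show -Kp * (1 + φ) = (1 + φ) * (-Kp) by ring]
    exact mul_le_mul_iff_right₀ h1
  have hB : ∀ φ x : ℝ, 0 < φ → (Km * (1 + φ) ≤ vbar x φ ↔ Km ≤ v x (p φ)) := by
    intro φ x hφ
    have h1 := h1φ φ hφ
    rw [hvbar' x φ, show Km * (1 + φ) = (1 + φ) * Km by ring]
    exact mul_le_mul_iff_right₀ h1
  -- membership / bounds
  have hAne : ∀ φ : ℝ, 0 < φ → xps ∈ {x : ℝ | vbar x φ ≤ -Kp * (1 + φ)} := by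
    intro φ hφ
    exact (hA φ xps hφ).2 (hbd_p _ (hpmem φ hφ) xps le_rfl)
  have hAub : ∀ φ : ℝ, 0 < φ → xms ∈ upperBounds {x : ℝ | vbar x φ ≤ -Kp * (1 + φ)} := by
    intro φ hφ x hx
    by_contra h
    push_neg at h
    have h1 : Km ≤ v x (p φ) := hbd_m _ (hpmem φ hφ) x h.le
    have h2 : v x (p φ) ≤ -Kp := (hA φ x hφ).1 hx
    linarith
  have hBne : ∀ φ : ℝ, 0 < φ → xms ∈ {x : ℝ | Km * (1 + φ) ≤ vbar x φ} := by
    intro φ hφ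
    exact (hB φ xms hφ).2 (hbd_m _ (hpmem φ hφ) xms le_rfl)
  have hBlb : ∀ φ : ℝ, 0 < φ → xps ∈ lowerBounds {x : ℝ | Km * (1 + φ) ≤ vbar x φ} := by
    intro φ hφ x hx
    by_contra h
    push_neg at h
    have h1 : v x (p φ) ≤ -Kp := hbd_p _ (hpmem φ hφ) x h.le
    have h2 : Km ≤ v x (p φ) := (hB φ x hφ).1 hx
    linarith
  have hAlub : ∀ φ : ℝ, 0 < φ → IsLUB {x : ℝ | vbar x φ ≤ -Kp * (1 + φ)} (bp φ) := by
    intro φ hφ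
    rw [hbp φ]
    exact isLUB_csSup ⟨xps, hAne φ hφ⟩ ⟨xms, hAub φ hφ⟩
  have hBglb : ∀ φ : ℝ, 0 < φ → IsGLB {x : ℝ | Km * (1 + φ) ≤ vbar x φ} (bm φ) := by
    intro φ hφ
    rw [hbm φ]
    exact isGLB_csInf ⟨xms, hBne φ hφ⟩ ⟨xps, hBlb φ hφ⟩
  -- key one-sided characterizations
  have hle_bp : ∀ φ : ℝ, 0 < φ → ∀ x : ℝ, v x (p φ) ≤ -Kp → x ≤ bp φ :=
    fun φ hφ x hx => (hAlub φ hφ).1 ((hA φ x hφ).2 hx)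
  have hge_bm : ∀ φ : ℝ, 0 < φ → ∀ x : ℝ, Km ≤ v x (p φ) → bm φ ≤ x :=
    fun φ hφ x hx => (hBglb φ hφ).1 ((hB φ x hφ).2 hx)
  have hlt_bp : ∀ φ : ℝ, 0 < φ → ∀ x : ℝ, x < bp φ → v x (p φ) ≤ -Kp := by
    intro φ hφ x hx
    rw [hbp φ] at hx
    obtain ⟨a, ha, hxa⟩ := exists_lt_of_lt_csSup ⟨xps, hAne φ hφ⟩ hx
    have : v a (p φ) ≤ -Kp := (hA φ a hφ).1 ha
    exact le_trans (hv_x _ (hpmem φ hφ) hxa.le) this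
  have hgt_bm : ∀ φ : ℝ, 0 < φ → ∀ x : ℝ, bm φ < x → Km ≤ v x (p φ) := by
    intro φ hφ x hx
    rw [hbm φ] at hx
    obtain ⟨a, ha, hax⟩ := exists_lt_of_csInf_lt ⟨xms, hBne φ hφ⟩ hx
    have : Km ≤ v a (p φ) := (hB φ a hφ).1 ha
    exact le_trans this (hv_x _ (hpmem φ hφ) hax.le)
  -- continuity facts
  have hvopen : IsOpen ((Set.univ : Set ℝ) ×ˢ Set.Ioo (0:ℝ) 1) := isOpen_univ.prod isOpen_Ioo
  have hvCA : ∀ x q : ℝ, q ∈ Set.Ioo (0:ℝ) 1 →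
      ContinuousAt (fun z : ℝ × ℝ => v z.1 z.2) (x, q) :=
    fun x q hq => hv_cont.continuousAt (hvopen.mem_nhds ⟨Set.mem_univ x, hq⟩)
  have hvx_cont : ∀ q : ℝ, q ∈ Set.Ioo (0:ℝ) 1 → Continuous fun x => v x q := by
    intro q hq
    rw [continuous_iff_continuousAt]
    intro x
    have hca : ContinuousAt (fun y : ℝ => (y, q)) x :=
      (continuous_id.prodMk continuous_const).continuousAt
    exact Filter.Tendsto.comp (hvCA x q hq) hca
  have hpcont : ∀ φ : ℝ, 0 < φ → ContinuousAt p φ := by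
    intro φ hφ
    exact ContinuousAt.div continuousAt_id
      ((continuous_const.add continuous_id).continuousAt) (ne_of_gt (h1φ φ hφ))
  have hvp_cont : ∀ x φ : ℝ, 0 < φ → ContinuousAt (fun ψ => v x (p ψ)) φ := by
    intro x φ hφ
    have hca : ContinuousAt (fun ψ : ℝ => (x, p ψ)) φ :=
      continuousAt_const.prodMk (hpcont φ hφ)
    exact Filter.Tendsto.comp (g := fun z : ℝ × ℝ => v z.1 z.2) (hvCA x (p φ) (hpmem φ hφ)) hca
  -- limit lemmas
  have hbp_left : ∀ φ : ℝ, 0 < φ → ∀ x : ℝ,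
      (∀ ψ, ψ ∈ Set.Ioo 0 φ → v x (p ψ) ≤ -Kp) → x ≤ bp φ := by
    intro φ hφ x hx
    apply hle_bp φ hφ x
    have ht : Tendsto (fun ψ => v x (p ψ)) (𝓝[<] φ) (𝓝 (v x (p φ))) :=
      ((hvp_cont x φ hφ).tendsto).mono_left nhdsWithin_le_nhds
    exact le_of_tendsto ht (eventually_of_mem (Ioo_mem_nhdsLT_of_mem ⟨hφ, le_rfl⟩) hx)
  have hbm_right : ∀ φ : ℝ, 0 < φ → ∀ x : ℝ,
      (∀ ψ, ψ ∈ Set.Ioo φ (φ + 1) → Km ≤ v x (p ψ)) → bm φ ≤ x := by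
    intro φ hφ x hx
    apply hge_bm φ hφ x
    have ht : Tendsto (fun ψ => v x (p ψ)) (𝓝[>] φ) (𝓝 (v x (p φ))) :=
      ((hvp_cont x φ hφ).tendsto).mono_left nhdsWithin_le_nhds
    exact ge_of_tendsto ht (eventually_of_mem (Ioo_mem_nhdsGT_of_mem ⟨le_rfl, by linarith⟩) hx)
  -- antitonicity
  have hbp_anti : AntitoneOn bp (Set.Ioi 0) := by
    intro a ha b hb hab
    apply (hAlub b hb).2
    intro x hx
    apply hle_bp a ha x
    have h1 : v x (p b) ≤ -Kp := (hA b x hb).1 hx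
    have h2 : v x (p a) ≤ v x (p b) :=
      hv_pi x (hpmem a ha) (hpmem b hb) (hpmono a b ha hab)
    linarith
  have hbm_anti : AntitoneOn bm (Set.Ioi 0) := by
    intro a ha b hb hab
    apply (hBglb a ha).2
    intro x hx
    apply hge_bm b hb x
    have h1 : Km ≤ v x (p a) := (hB a x ha).1 hx
    have h2 : v x (p a) ≤ v x (p b) :=
      hv_pi x (hpmem a ha) (hpmem b hb) (hpmono a b ha hab)
    linarith
  refine ⟨fun φ hφ => ⟨hAlub φ hφ, hBglb φ hφ⟩, hbp_anti, hbm_anti, ?_, ?_, ?_⟩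
  · -- left continuity of bp
    intro φ hφ
    rw [ContinuousWithinAt]
    rw [tendsto_order]
    constructor
    · intro b hb
      filter_upwards [Ioo_mem_nhdsLT_of_mem (⟨hφ, le_rfl⟩ : φ ∈ Set.Ioc 0 φ)] with ψ hψ
      exact lt_of_lt_of_le hb (hbp_anti hψ.1 hφ hψ.2.le)
    · intro b hb
      have hex : ∃ ψ₀ ∈ Set.Ioo (0:ℝ) φ, bp ψ₀ < b := by
        by_contra hcon
        push_neg at hcon
        have hx : ∀ ψ, ψ ∈ Set.Ioo 0 φ → v ((bp φ + b) / 2) (p ψ) ≤ -Kp := by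
          intro ψ hψ
          apply hlt_bp ψ hψ.1
          have := hcon ψ hψ
          linarith
        have := hbp_left φ hφ ((bp φ + b) / 2) hx
        linarith
      obtain ⟨ψ₀, hψ₀, hψ₀b⟩ := hex
      filter_upwards [Ioo_mem_nhdsLT_of_mem (⟨hψ₀.2, le_rfl⟩ : φ ∈ Set.Ioc ψ₀ φ)] with ψ hψ
      have : bp ψ ≤ bp ψ₀ := hbp_anti hψ₀.1 (lt_trans hψ₀.1 hψ.1) hψ.1.le
      linarith
  · -- right continuity of bm
    intro φ hφ
    rw [ContinuousWithinAt]
    rw [tendsto_order]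
    constructor
    · intro b hb
      have hex : ∃ ψ₀ ∈ Set.Ioo φ (φ + 1), b < bm ψ₀ := by
        by_contra hcon
        push_neg at hcon
        have hx : ∀ ψ, ψ ∈ Set.Ioo φ (φ + 1) → Km ≤ v ((b + bm φ) / 2) (p ψ) := by
          intro ψ hψ
          apply hgt_bm ψ (lt_trans hφ hψ.1)
          have := hcon ψ hψ
          linarith
        have := hbm_right φ hφ ((b + bm φ) / 2) hx
        linarith
      obtain ⟨ψ₀, hψ₀, hψ₀b⟩ := hex
      filter_upwards [Ioo_mem_nhdsGT_of_mem (⟨le_rfl, hψ₀.1⟩ : φ ∈ Set.Ico φ ψ₀)] with ψ hψ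
      have : bm ψ₀ ≤ bm ψ := hbm_anti (lt_trans hφ hψ.1) (lt_trans hφ hψ₀.1) hψ.2.le
      linarith
    · intro b hb
      filter_upwards [Ioo_mem_nhdsGT_of_mem (⟨le_rfl, by linarith⟩ : φ ∈ Set.Ico φ (φ + 1))]
        with ψ hψ
      exact lt_of_le_of_lt (hbm_anti hφ (lt_trans hφ hψ.1) hψ.1.le) hb
  · -- bounds and ordering
    intro φ hφ
    have hxpsbp : xps ≤ bp φ := (hAlub φ hφ).1 (hAne φ hφ)
    have hbmxms : bm φ ≤ xms := (hBglb φ hφ).1 (hBne φ hφ)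
    refine ⟨hxpsbp, ?_, hbmxms⟩
    -- strict inequality via closedness of the sets
    have hAcl : IsClosed {x : ℝ | v x (p φ) ≤ -Kp} :=
      isClosed_le (hvx_cont (p φ) (hpmem φ hφ)) continuous_const
    have hBcl : IsClosed {x : ℝ | Km ≤ v x (p φ)} :=
      isClosed_le continuous_const (hvx_cont (p φ) (hpmem φ hφ))
    have hAeq : {x : ℝ | vbar x φ ≤ -Kp * (1 + φ)} = {x : ℝ | v x (p φ) ≤ -Kp} :=
      Set.ext fun x => hA φ x hφ
    have hBeq : {x : ℝ | Km * (1 + φ) ≤ vbar x φ} = {x : ℝ | Km ≤ v x (p φ)} :=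
      Set.ext fun x => hB φ x hφ
    have hbpA : v (bp φ) (p φ) ≤ -Kp := by
      have : bp φ ∈ {x : ℝ | v x (p φ) ≤ -Kp} := by
        rw [hbp φ, hAeq]
        exact hAcl.csSup_mem ⟨xps, hAeq ▸ hAne φ hφ⟩
          ⟨xms, by rw [← hAeq]; exact hAub φ hφ⟩
      exact this
    have hbmB : Km ≤ v (bm φ) (p φ) := by
      have : bm φ ∈ {x : ℝ | Km ≤ v x (p φ)} := by
        rw [hbm φ, hBeq]
        exact hBcl.csInf_mem ⟨xms, hBeq ▸ hBne φ hφ⟩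
          ⟨xps, by rw [← hBeq]; exact hBlb φ hφ⟩
      exact this
    by_contra h
    push_neg at h
    have : v (bm φ) (p φ) ≤ v (bp φ) (p φ) := hv_x _ (hpmem φ hφ) h
    linarith
end

section
/- Let ζ > 0, β > 0, c > 0, let f : ℝ → ℝ be nonincreasing, let h : ℝ → ℝ be Lipschitz continuous, let a < t be real numbers, and let w : ℝ → ℝ be any function. Define V(s) := f(c·e^{β·w(s)}) − ζ·w(s) + h(s). (i) If limsup_{s→t⁻} (w(t) − w(s))/(t − s) = +∞, then there exists s ∈ [a,t) with V(s) > V(t); in particular t is not a maximum point of V on [a,t]. (ii) If liminf_{s→t⁻} (w(t) − w(s))/(t − s) = −∞, then there exists s ∈ [a,t) with V(s) < V(t); in particular t is not a minimum point of V on [a,t]. -/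
/-- Deterministic core of Lemma C.1 of the paper: if the left upper (resp. lower) Dini
quotient of `w` at `t` is `+∞` (resp. `−∞`), then `t` is not a maximum (resp. minimum) point
of `s ↦ f(c·e^{β·w(s)}) − ζ·w(s) + h(s)` on `[a,t]`. -/
theorem stmt_10 (ζ β c : ℝ) (hζ : 0 < ζ) (hβ : 0 < β) (hc : 0 < c)
    (f : ℝ → ℝ) (hf : Antitone f) (h : ℝ → ℝ) (L : NNReal) (hh : LipschitzWith L h)
    (a t : ℝ) (hat : a < t) (w : ℝ → ℝ) (V : ℝ → ℝ)
    (hV : ∀ s : ℝ, V s = f (c * Real.exp (β * w s)) - ζ * w s + h s) :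
    ((∀ M : ℝ, ∃ᶠ s in nhdsWithin t (Set.Iio t), M < (w t - w s) / (t - s)) →
      ∃ s ∈ Set.Ico a t, V t < V s) ∧
    ((∀ M : ℝ, ∃ᶠ s in nhdsWithin t (Set.Iio t), (w t - w s) / (t - s) < M) →
      ∃ s ∈ Set.Ico a t, V s < V t) := by
  have hmem : Set.Ico a t ∈ nhdsWithin t (Set.Iio t) :=
    Filter.mem_of_superset (Ioo_mem_nhdsLT_of_mem ⟨hat, le_refl t⟩) Set.Ioo_subset_Ico_self
  have hL : (0:ℝ) ≤ L := L.coe_nonneg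
  constructor
  · intro H
    obtain ⟨s, hq, hs⟩ := ((H ((L:ℝ)/ζ)).and_eventually (Filter.eventually_of_mem hmem
      (fun x hx => hx))).exists
    refine ⟨s, hs, ?_⟩
    have hst : (0:ℝ) < t - s := by linarith [hs.2]
    have hq' : (L:ℝ)/ζ * (t - s) < w t - w s := (lt_div_iff₀ hst).mp hq
    have hws : w s < w t := by nlinarith [mul_nonneg (div_nonneg hL hζ.le) hst.le]
    have hfle : f (c * Real.exp (β * w t)) ≤ f (c * Real.exp (β * w s)) := by
      apply hf
      have := Real.exp_le_exp.mpr (mul_le_mul_of_nonneg_left hws.le hβ.le)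
      nlinarith [Real.exp_pos (β * w s)]
    have hdist : h s - h t ≥ -((L:ℝ) * (t - s)) := by
      have := hh.dist_le_mul s t
      rw [Real.dist_eq, Real.dist_eq] at this
      have habs : |s - t| = t - s := by rw [abs_sub_comm]; exact abs_of_pos hst
      rw [habs] at this
      linarith [(abs_le.mp this).1]
    rw [hV s, hV t]
    have hLz : ζ * ((L:ℝ)/ζ) = L := by field_simp
    nlinarith [mul_lt_mul_of_pos_left hq' hζ]
  · intro H
    obtain ⟨s, hq, hs⟩ := ((H (-((L:ℝ)/ζ))).and_eventually (Filter.eventually_of_mem hmem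
      (fun x hx => hx))).exists
    refine ⟨s, hs, ?_⟩
    have hst : (0:ℝ) < t - s := by linarith [hs.2]
    have hq' : w t - w s < -((L:ℝ)/ζ) * (t - s) := (div_lt_iff₀ hst).mp hq
    have hws : w t < w s := by nlinarith [mul_nonneg (div_nonneg hL hζ.le) hst.le]
    have hfle : f (c * Real.exp (β * w s)) ≤ f (c * Real.exp (β * w t)) := by
      apply hf
      have := Real.exp_le_exp.mpr (mul_le_mul_of_nonneg_left hws.le hβ.le)
      nlinarith [Real.exp_pos (β * w t)]
    have hdist : h s - h t ≤ (L:ℝ) * (t - s) := by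
      have := hh.dist_le_mul s t
      rw [Real.dist_eq, Real.dist_eq] at this
      have habs : |s - t| = t - s := by rw [abs_sub_comm]; exact abs_of_pos hst
      rw [habs] at this
      linarith [(abs_le.mp this).2]
    rw [hV s, hV t]
    have hLz : ζ * ((L:ℝ)/ζ) = L := by field_simp
    nlinarith [mul_lt_mul_of_pos_left hq' hζ]
end
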